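/- Let A ⊆ {0,1,...,m} be a set of n integers and let k be a positive integer with n ≥ (m+1)/k. Then there exists u ∈ {−1, 0, ..., m+1} such that either (i) −1 ≤ u ≤ m/2 and for every integer v with u+1 ≤ v ≤ m we have |A ∩ [u+1, v]| ≥ (v−u)/(2k), or (ii) m/2 < u ≤ m+1 and for every integer v with 0 ≤ v ≤ u−1 we have |A ∩ [v, u−1]| ≥ (u−v)/(2k). -/
import Mathlib


open Pointwise

/-- Greedy sumset: sums a + b where b fits strictly below the gap to the next element of A. -/
def greedySum (A B : Set ℤ) : Set ℤ :=
  {z | ∃ a ∈ A, ∃ b ∈ B, 0 ≤ b ∧ z = a + b ∧ ∀ a' ∈ A, a' ≤ a + b → a' ≤ a}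

/-- Density of a set of integers over the interval [1, z]. -/
noncomputable def dens (z : ℕ) (S : Set ℤ) : ℝ :=
  sInf {r : ℝ | ∃ z' : ℕ, 1 ≤ z' ∧ z' ≤ z ∧ r = (S ∩ Set.Icc 1 (z' : ℤ)).ncard / z'}

/-- k-fold greedy sumset. -/
def kGreedy : ℕ → Set ℤ → Set ℤ
  | 0, _ => {0}
  | k + 1, A => greedySum A (kGreedy k A)

/-- k-fold sumset. -/
def kFold : ℕ → Set ℤ → Set ℤ
  | 0, _ => {0}
  | k + 1, A => A + kFold k A

private lemma stmt6_chain1 (m : ℕ) (A : Finset ℤ) (k : ℕ)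
    (hfail : ∀ u : ℤ, -1 ≤ u → (u : ℝ) ≤ (m : ℝ) / 2 → ∃ v : ℤ, u + 1 ≤ v ∧ v ≤ (m : ℤ) ∧
      ((A.filter (fun a => u + 1 ≤ a ∧ a ≤ v)).card : ℝ) < ((v - u : ℤ) : ℝ) / (2 * k)) :
    ∀ d : ℕ, ∀ u : ℤ, ((m : ℤ) - u).toNat ≤ d → -1 ≤ u → (u : ℝ) ≤ (m : ℝ) / 2 →
      ((A.filter (fun a => 0 ≤ a ∧ a ≤ u)).card : ℝ) ≤ ((u : ℝ) + 1) / (2 * k) →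
      ∃ t : ℤ, (m : ℝ) / 2 < (t : ℝ) ∧ t ≤ (m : ℤ) ∧
        ((A.filter (fun a => 0 ≤ a ∧ a ≤ t)).card : ℝ) < ((t : ℝ) + 1) / (2 * k) := by
  intro d
  induction d with
  | zero =>
    intro u hdu hu1 hu2 _
    obtain ⟨v, hv1, hv2, _⟩ := hfail u hu1 hu2
    omega
  | succ d ih =>
    intro u hdu hu1 hu2 hcount
    obtain ⟨v, hv1, hv2, hv3⟩ := hfail u hu1 hu2
    have hsub : A.filter (fun a => 0 ≤ a ∧ a ≤ v) ⊆
        A.filter (fun a => 0 ≤ a ∧ a ≤ u) ∪ A.filter (fun a => u + 1 ≤ a ∧ a ≤ v) := by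
      intro a ha
      simp only [Finset.mem_filter, Finset.mem_union] at *
      obtain ⟨haA, h0, hav⟩ := ha
      by_cases hau : a ≤ u
      · exact Or.inl ⟨haA, h0, hau⟩
      · exact Or.inr ⟨haA, by omega, hav⟩
    have hcv : ((A.filter (fun a => 0 ≤ a ∧ a ≤ v)).card : ℝ) < ((v : ℝ) + 1) / (2 * k) := by
      have h1 : (A.filter (fun a => 0 ≤ a ∧ a ≤ v)).card ≤
          (A.filter (fun a => 0 ≤ a ∧ a ≤ u)).card +
          (A.filter (fun a => u + 1 ≤ a ∧ a ≤ v)).card :=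
        le_trans (Finset.card_le_card hsub) (Finset.card_union_le _ _)
      have h2 : ((u : ℝ) + 1) / (2 * k) + ((v : ℝ) - (u : ℝ)) / (2 * k) = ((v : ℝ) + 1) / (2 * k) := by
        ring
      have h3 : ((v - u : ℤ) : ℝ) = (v : ℝ) - (u : ℝ) := by push_cast; ring
      calc ((A.filter (fun a => 0 ≤ a ∧ a ≤ v)).card : ℝ)
          ≤ ((A.filter (fun a => 0 ≤ a ∧ a ≤ u)).card : ℝ) +
            ((A.filter (fun a => u + 1 ≤ a ∧ a ≤ v)).card : ℝ) := by exact_mod_cast h1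
        _ < ((u : ℝ) + 1) / (2 * k) + ((v : ℝ) - (u : ℝ)) / (2 * k) := by
            rw [h3] at hv3; linarith
        _ = ((v : ℝ) + 1) / (2 * k) := h2
    by_cases hvm : (m : ℝ) / 2 < (v : ℝ)
    · exact ⟨v, hvm, hv2, hcv⟩
    · exact ih v (by omega) (by omega) (le_of_not_gt hvm) (le_of_lt hcv)

private lemma stmt6_chain2 (m : ℕ) (A : Finset ℤ) (k : ℕ)
    (hfail : ∀ u : ℤ, (m : ℝ) / 2 < (u : ℝ) → u ≤ (m : ℤ) + 1 → ∃ v : ℤ, 0 ≤ v ∧ v ≤ u - 1 ∧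
      ((A.filter (fun a => v ≤ a ∧ a ≤ u - 1)).card : ℝ) < ((u - v : ℤ) : ℝ) / (2 * k)) :
    ∀ d : ℕ, ∀ u : ℤ, u.toNat ≤ d → (m : ℝ) / 2 < (u : ℝ) → u ≤ (m : ℤ) + 1 →
      ((A.filter (fun a => u ≤ a ∧ a ≤ (m : ℤ))).card : ℝ) ≤ ((m : ℝ) + 1 - (u : ℝ)) / (2 * k) →
      ∃ s : ℤ, 0 ≤ s ∧ (s : ℝ) ≤ (m : ℝ) / 2 ∧
        ((A.filter (fun a => s ≤ a ∧ a ≤ (m : ℤ))).card : ℝ) < ((m : ℝ) + 1 - (s : ℝ)) / (2 * k) := by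
  intro d
  induction d with
  | zero =>
    intro u hdu hu1 hu2 _
    obtain ⟨v, hv1, hv2, _⟩ := hfail u hu1 hu2
    have : (0 : ℝ) ≤ (m : ℝ) / 2 := by positivity
    have : (0 : ℝ) < (u : ℝ) := lt_of_le_of_lt this hu1
    have : (0 : ℤ) < u := by exact_mod_cast this
    omega
  | succ d ih =>
    intro u hdu hu1 hu2 hcount
    obtain ⟨v, hv1, hv2, hv3⟩ := hfail u hu1 hu2
    have hsub : A.filter (fun a => v ≤ a ∧ a ≤ (m : ℤ)) ⊆
        A.filter (fun a => v ≤ a ∧ a ≤ u - 1) ∪ A.filter (fun a => u ≤ a ∧ a ≤ (m : ℤ)) := by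
      intro a ha
      simp only [Finset.mem_filter, Finset.mem_union] at *
      obtain ⟨haA, hva, ham⟩ := ha
      by_cases hau : a ≤ u - 1
      · exact Or.inl ⟨haA, hva, hau⟩
      · exact Or.inr ⟨haA, by omega, ham⟩
    have hcv : ((A.filter (fun a => v ≤ a ∧ a ≤ (m : ℤ))).card : ℝ) <
        ((m : ℝ) + 1 - (v : ℝ)) / (2 * k) := by
      have h1 : (A.filter (fun a => v ≤ a ∧ a ≤ (m : ℤ))).card ≤
          (A.filter (fun a => v ≤ a ∧ a ≤ u - 1)).card +
          (A.filter (fun a => u ≤ a ∧ a ≤ (m : ℤ))).card :=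
        le_trans (Finset.card_le_card hsub) (Finset.card_union_le _ _)
      have h3 : ((u - v : ℤ) : ℝ) = (u : ℝ) - (v : ℝ) := by push_cast; ring
      have h2 : ((u : ℝ) - (v : ℝ)) / (2 * k) + ((m : ℝ) + 1 - (u : ℝ)) / (2 * k)
          = ((m : ℝ) + 1 - (v : ℝ)) / (2 * k) := by ring
      calc ((A.filter (fun a => v ≤ a ∧ a ≤ (m : ℤ))).card : ℝ)
          ≤ ((A.filter (fun a => v ≤ a ∧ a ≤ u - 1)).card : ℝ) +
            ((A.filter (fun a => u ≤ a ∧ a ≤ (m : ℤ))).card : ℝ) := by exact_mod_cast h1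
        _ < ((u : ℝ) - (v : ℝ)) / (2 * k) + ((m : ℝ) + 1 - (u : ℝ)) / (2 * k) := by
            rw [h3] at hv3; linarith
        _ = ((m : ℝ) + 1 - (v : ℝ)) / (2 * k) := h2
    by_cases hvm : (v : ℝ) ≤ (m : ℝ) / 2
    · exact ⟨v, hv1, hvm, hcv⟩
    · exact ih v (by omega) (lt_of_not_ge hvm) (by omega) (le_of_lt hcv)

theorem stmt6 (m : ℕ) (A : Finset ℤ) (hA : A ⊆ Finset.Icc 0 (m : ℤ)) (n k : ℕ)
    (hn : A.card = n) (hk : 1 ≤ k) (hnk : (n : ℝ) ≥ ((m : ℝ) + 1) / k) :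
    ∃ u : ℤ, -1 ≤ u ∧ u ≤ (m : ℤ) + 1 ∧
      (((u : ℝ) ≤ (m : ℝ) / 2 ∧ ∀ v : ℤ, u + 1 ≤ v → v ≤ (m : ℤ) →
          (((A.filter (fun a => u + 1 ≤ a ∧ a ≤ v)).card : ℝ)) ≥ ((v - u : ℤ) : ℝ) / (2 * k)) ∨
       ((m : ℝ) / 2 < (u : ℝ) ∧ ∀ v : ℤ, 0 ≤ v → v ≤ u - 1 →
          (((A.filter (fun a => v ≤ a ∧ a ≤ u - 1)).card : ℝ)) ≥ ((u - v : ℤ) : ℝ) / (2 * k))) := by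
  by_contra hcon
  push_neg at hcon
  have hfail1 : ∀ u : ℤ, -1 ≤ u → (u : ℝ) ≤ (m : ℝ) / 2 → ∃ v : ℤ, u + 1 ≤ v ∧ v ≤ (m : ℤ) ∧
      ((A.filter (fun a => u + 1 ≤ a ∧ a ≤ v)).card : ℝ) < ((v - u : ℤ) : ℝ) / (2 * k) := by
    intro u h1 h2
    have hum : u ≤ (m : ℤ) + 1 := by
      have : (u : ℝ) ≤ (m : ℝ) := le_trans h2 (by
        have : (0 : ℝ) ≤ (m : ℝ) := by positivity
        linarith)
      have : u ≤ (m : ℤ) := by exact_mod_cast this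
      omega
    obtain ⟨h3, _⟩ := hcon u h1 hum
    exact h3 h2
  have hfail2 : ∀ u : ℤ, (m : ℝ) / 2 < (u : ℝ) → u ≤ (m : ℤ) + 1 → ∃ v : ℤ, 0 ≤ v ∧ v ≤ u - 1 ∧
      ((A.filter (fun a => v ≤ a ∧ a ≤ u - 1)).card : ℝ) < ((u - v : ℤ) : ℝ) / (2 * k) := by
    intro u h1 h2
    have hu1 : -1 ≤ u := by
      have h0 : (0 : ℝ) ≤ (m : ℝ) / 2 := by positivity
      have : (0 : ℝ) < (u : ℝ) := lt_of_le_of_lt h0 h1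
      have : (0 : ℤ) < u := by exact_mod_cast this
      omega
    obtain ⟨_, h4⟩ := hcon u hu1 h2
    exact h4 h1
  -- start chain 1 at u = -1
  have hstart1 : ((A.filter (fun a => 0 ≤ a ∧ a ≤ (-1 : ℤ))).card : ℝ) ≤ (((-1 : ℤ) : ℝ) + 1) / (2 * k) := by
    have : A.filter (fun a => 0 ≤ a ∧ a ≤ (-1 : ℤ)) = ∅ := by
      apply Finset.filter_false_of_mem
      intro a _
      omega
    rw [this]
    norm_num
  have hm2 : ((-1 : ℤ) : ℝ) ≤ (m : ℝ) / 2 := by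
    have : (0 : ℝ) ≤ (m : ℝ) / 2 := by positivity
    push_cast
    linarith
  obtain ⟨t, ht1, ht2, ht3⟩ :=
    stmt6_chain1 m A k hfail1 ((m : ℤ) - (-1)).toNat (-1) le_rfl (by norm_num) hm2 hstart1
  -- start chain 2 at u = m + 1
  have hstart2 : ((A.filter (fun a => (m : ℤ) + 1 ≤ a ∧ a ≤ (m : ℤ))).card : ℝ) ≤
      ((m : ℝ) + 1 - (((m : ℤ) + 1 : ℤ) : ℝ)) / (2 * k) := by
    have : A.filter (fun a => (m : ℤ) + 1 ≤ a ∧ a ≤ (m : ℤ)) = ∅ := by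
      apply Finset.filter_false_of_mem
      intro a _
      omega
    rw [this]
    push_cast
    norm_num
  have hm3 : (m : ℝ) / 2 < (((m : ℤ) + 1 : ℤ) : ℝ) := by
    push_cast
    have : (0 : ℝ) ≤ (m : ℝ) := by positivity
    linarith
  obtain ⟨s, hs1, hs2, hs3⟩ :=
    stmt6_chain2 m A k hfail2 ((m : ℤ) + 1).toNat ((m : ℤ) + 1) le_rfl hm3 le_rfl hstart2
  -- combine
  have hst : s ≤ t := by
    have : (s : ℝ) < (t : ℝ) := lt_of_le_of_lt hs2 ht1
    have : s < t := by exact_mod_cast this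
    omega
  have hcover : A ⊆ A.filter (fun a => 0 ≤ a ∧ a ≤ t) ∪ A.filter (fun a => s ≤ a ∧ a ≤ (m : ℤ)) := by
    intro a ha
    have := hA ha
    simp only [Finset.mem_Icc] at this
    simp only [Finset.mem_filter, Finset.mem_union]
    by_cases hat : a ≤ t
    · exact Or.inl ⟨ha, this.1, hat⟩
    · exact Or.inr ⟨ha, by omega, this.2⟩
  have hcard : A.card ≤ (A.filter (fun a => 0 ≤ a ∧ a ≤ t)).card +
      (A.filter (fun a => s ≤ a ∧ a ≤ (m : ℤ))).card :=
    le_trans (Finset.card_le_card hcover) (Finset.card_union_le _ _)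
  have hkpos : (0 : ℝ) < 2 * (k : ℝ) := by
    have : (1 : ℝ) ≤ (k : ℝ) := by exact_mod_cast hk
    linarith
  have hkR : (1 : ℝ) ≤ (k : ℝ) := by exact_mod_cast hk
  have e1 : ((t : ℝ) + 1) / (2 * k) ≤ ((m : ℝ) + 1) / (2 * k) := by
    have : (t : ℝ) ≤ (m : ℝ) := by exact_mod_cast ht2
    gcongr <;> linarith
  have e2 : ((m : ℝ) + 1 - (s : ℝ)) / (2 * k) ≤ ((m : ℝ) + 1) / (2 * k) := by
    have : (0 : ℝ) ≤ (s : ℝ) := by exact_mod_cast hs1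
    gcongr <;> linarith
  have e3 : ((m : ℝ) + 1) / (2 * k) + ((m : ℝ) + 1) / (2 * k) = ((m : ℝ) + 1) / k := by
    field_simp
    ring
  have hcardR : (n : ℝ) ≤ ((A.filter (fun a => 0 ≤ a ∧ a ≤ t)).card : ℝ) +
      ((A.filter (fun a => s ≤ a ∧ a ≤ (m : ℤ))).card : ℝ) := by
    rw [← hn]
    exact_mod_cast hcard
  linarith
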